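/- Let n ≥ 1 and let m_1, …, m_n be integers with m_i ≥ 2 for all i. If m_{i_0} ≥ 3 for some index i_0 with 1 ≤ i_0 ≤ n, then det T(m_1, …, m_n) > (i_0 + 1) · det T(m_{i_0+1}, …, m_n). (This is Lemma 3.3(6): Δ(Γ) > (i_0+1)·Δ(Γ∖\overline{v_1v_{i_0}}).) -/

import Mathlib

/-- The determinant of the `n × n` tridiagonal integer matrix whose diagonal
entries are `m 1, …, m n` (so the `(i,i)` entry, `i : Fin n`, is `m (i+1)`),
whose entries immediately above and below the diagonal are all `-1`, and whose
other entries are `0`.  For `n = 0` this is `1` (determinant of the empty matrix). -/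
def tridiagDet (n : ℕ) (m : ℕ → ℤ) : ℤ :=
  Matrix.det (fun i j : Fin n =>
    if (i : ℕ) = (j : ℕ) then m ((i : ℕ) + 1)
    else if (i : ℕ) + 1 = (j : ℕ) ∨ (j : ℕ) + 1 = (i : ℕ) then -1 else 0)

lemma tridiagDet_rec (k : ℕ) (m : ℕ → ℤ) :
    tridiagDet (k + 2) m
      = m 1 * tridiagDet (k + 1) (fun i => m (i + 1))
        - tridiagDet k (fun i => m (i + 2)) := by
  unfold tridiagDet
  set A : Matrix (Fin (k+2)) (Fin (k+2)) ℤ := fun i j =>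
    if (i : ℕ) = (j : ℕ) then m ((i : ℕ) + 1)
    else if (i : ℕ) + 1 = (j : ℕ) ∨ (j : ℕ) + 1 = (i : ℕ) then -1 else 0 with hA
  have hA' : A = Matrix.of (fun i j : Fin (k+2) =>
      if (i : ℕ) = (j : ℕ) then m ((i : ℕ) + 1)
      else if (i : ℕ) + 1 = (j : ℕ) ∨ (j : ℕ) + 1 = (i : ℕ) then -1 else 0) := rfl
  rw [Matrix.det_succ_column_zero A]
  rw [Fin.sum_univ_succ, Fin.sum_univ_succ]
  have htail : ∀ x : Fin k, ((-1:ℤ) ^ (x.succ.succ:ℕ) * A x.succ.succ 0 *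
      (A.submatrix x.succ.succ.succAbove Fin.succ).det) = 0 := by
    intro x
    have : A x.succ.succ 0 = 0 := by
      simp only [hA', Matrix.of_apply, Fin.val_succ, Fin.val_zero]
      simp only [Fin.val_succ, Fin.val_zero, Nat.add_eq_zero_iff, one_ne_zero, and_false, false_or, if_false]
      rw [if_neg (by omega)]
    rw [this]; ring
  rw [Finset.sum_congr rfl (fun x _ => htail x), Finset.sum_const_zero]
  have h00 : A 0 0 = m 1 := by simp [hA]
  have h10 : A (Fin.succ 0) 0 = -1 := by
    show (if _ then _ else _) = _
    rw [if_neg (by simp), if_pos (by simp)]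
  have hsub1 : A.submatrix (Fin.succAbove 0) Fin.succ
      = fun i j : Fin (k+1) =>
        if (i : ℕ) = (j : ℕ) then m ((i : ℕ) + 1 + 1)
        else if (i : ℕ) + 1 = (j : ℕ) ∨ (j : ℕ) + 1 = (i : ℕ) then -1 else 0 := by
    ext i j
    simp only [Matrix.submatrix_apply, Fin.succAbove_zero, hA', Matrix.of_apply, Fin.val_succ]
    by_cases h : (i : ℕ) = (j : ℕ)
    · rw [if_pos (by omega), if_pos h]
    · rw [if_neg (by omega), if_neg h]
      by_cases h2 : (i : ℕ) + 1 = (j : ℕ) ∨ (j : ℕ) + 1 = (i : ℕ)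
      · rw [if_pos (by omega), if_pos h2]
      · rw [if_neg (by omega), if_neg h2]
  -- second minor
  have hB : (A.submatrix (Fin.succ 0).succAbove Fin.succ).det
      = - Matrix.det (fun i j : Fin k =>
        if (i : ℕ) = (j : ℕ) then m ((i : ℕ) + 1 + 2)
        else if (i : ℕ) + 1 = (j : ℕ) ∨ (j : ℕ) + 1 = (i : ℕ) then -1 else 0) := by
    cases k with
    | zero =>
        rw [Matrix.det_fin_one, Matrix.submatrix_apply]
        erw [Matrix.det_fin_zero]
        show (if _ then _ else _) = _
        rw [if_neg (by decide), if_pos (by decide)]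
    | succ k' =>
        set B := A.submatrix (Fin.succ 0).succAbove Fin.succ with hBdef
        rw [Matrix.det_succ_row_zero B]
        rw [Fin.sum_univ_succ]
        have hrow : ∀ j : Fin (k'+1), ((-1:ℤ) ^ (j.succ:ℕ) * B 0 j.succ *
            (B.submatrix Fin.succ j.succ.succAbove).det) = 0 := by
          intro j
          have : B 0 j.succ = 0 := by
            simp only [hBdef, Matrix.submatrix_apply, hA', Matrix.of_apply]
            have h1 : ((Fin.succ 0 : Fin (k'+3)).succAbove 0 : ℕ) = 0 := by
              simp [Fin.succAbove]
            rw [h1]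
            simp only [Fin.val_succ]
            rw [if_neg (by omega), if_neg (by omega)]
          rw [this]; ring
        rw [Finset.sum_congr rfl (fun j _ => hrow j), Finset.sum_const_zero, add_zero]
        have hB00 : B 0 0 = -1 := by
          simp only [hBdef, Matrix.submatrix_apply, hA', Matrix.of_apply]
          have h1 : ((Fin.succ 0 : Fin (k'+3)).succAbove 0 : ℕ) = 0 := by
            simp [Fin.succAbove]
          rw [h1]
          simp only [Fin.val_succ, Fin.val_zero]
          rw [if_neg (by omega), if_pos (by simp)]
        have hsub2 : B.submatrix Fin.succ (Fin.succAbove 0)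
            = fun i j : Fin (k'+1) =>
              if (i : ℕ) = (j : ℕ) then m ((i : ℕ) + 1 + 2)
              else if (i : ℕ) + 1 = (j : ℕ) ∨ (j : ℕ) + 1 = (i : ℕ) then -1 else 0 := by
          ext i j
          simp only [Matrix.submatrix_apply, Fin.succAbove_zero, hBdef, hA', Matrix.of_apply]
          rw [Fin.succ_succAbove_succ, Fin.succAbove_zero]
          simp only [Fin.val_succ]
          by_cases h : (i : ℕ) = (j : ℕ)
          · rw [if_pos (by omega), if_pos h]
            try (congr 1 <;> omega)
          · rw [if_neg (by omega), if_neg h]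
            by_cases h2 : (i : ℕ) + 1 = (j : ℕ) ∨ (j : ℕ) + 1 = (i : ℕ)
            · rw [if_pos (by omega), if_pos h2]
            · rw [if_neg (by omega), if_neg h2]
        rw [hB00, Fin.succAbove_zero] at *
        rw [hsub2]
        simp
  rw [h00, h10, hsub1, hB]
  simp only [Fin.val_zero, Fin.val_succ, pow_zero, pow_one, zero_add]
  ring

lemma tridiagDet_zero (m : ℕ → ℤ) : tridiagDet 0 m = 1 := by
  rw [tridiagDet]; exact Matrix.det_fin_zero

lemma tridiagDet_one (m : ℕ → ℤ) : tridiagDet 1 m = m 1 := by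
  rw [tridiagDet]; erw [Matrix.det_fin_one]; simp

lemma tridiagDet_congr {j : ℕ} {m₁ m₂ : ℕ → ℤ} (h : ∀ i, m₁ i = m₂ i) :
    tridiagDet j m₁ = tridiagDet j m₂ := by
  have : m₁ = m₂ := funext h
  rw [this]

lemma tridiagDet_both (j : ℕ) : ∀ m : ℕ → ℤ, (∀ i, 1 ≤ i → i ≤ j + 1 → 2 ≤ m i) →
    1 ≤ tridiagDet j (fun i => m (i + 1)) ∧
    tridiagDet j (fun i => m (i + 1)) + 1 ≤ tridiagDet (j + 1) m := by
  induction j with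
  | zero =>
      intro m hm
      rw [tridiagDet_zero, tridiagDet_one]
      exact ⟨le_refl 1, by have := hm 1 le_rfl le_rfl; omega⟩
  | succ j IH =>
      intro m hm
      obtain ⟨h1, h2⟩ := IH (fun i => m (i + 1)) (by intro i hi hij; exact hm (i+1) (by omega) (by omega))
      have hrec := tridiagDet_rec j m
      have e1 : tridiagDet j (fun i => m (i + 2)) = tridiagDet j (fun i => m (i + 1 + 1)) :=
        tridiagDet_congr (fun i => by norm_num)
      rw [e1] at hrec
      have hm1 : 2 ≤ m 1 := hm 1 le_rfl (by omega)
      constructor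
      · linarith
      · nlinarith [h1, h2, hrec, hm1]

/-- Lemma 3.3(6): for a chain with weights `m_1, …, m_n`, each `m_i ≥ 2`,
if `m_{i_0} ≥ 3` for some `1 ≤ i_0 ≤ n`, then
`det T(m_1, …, m_n) > (i_0 + 1) · det T(m_{i_0+1}, …, m_n)`. -/
theorem tridiagDet_gt_of_weight_ge_three (n : ℕ) (hn : 1 ≤ n) (m : ℕ → ℤ)
    (hm : ∀ i, 1 ≤ i → i ≤ n → 2 ≤ m i)
    (i₀ : ℕ) (hi₀1 : 1 ≤ i₀) (hi₀n : i₀ ≤ n) (hm3 : 3 ≤ m i₀) :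
    tridiagDet n m > ((i₀ : ℤ) + 1) * tridiagDet (n - i₀) (fun i => m (i₀ + i)) := by
  set g : ℕ → ℤ := fun k => tridiagDet (n - k) (fun i => m (k + i)) with hg
  -- basic facts
  have hgn : g n = 1 := by simp [hg, tridiagDet_zero]
  have hg0 : g 0 = tridiagDet n m := by
    simp only [hg, Nat.sub_zero]
    exact tridiagDet_congr (fun i => by norm_num)
  -- F1 : for k < n, 1 ≤ g (k+1) and g (k+1) + 1 ≤ g k
  have F1 : ∀ k, k < n → 1 ≤ g (k + 1) ∧ g (k + 1) + 1 ≤ g k := by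
    intro k hk
    have hj : n - k = (n - k - 1) + 1 := by omega
    obtain ⟨h1, h2⟩ := tridiagDet_both (n - k - 1) (fun i => m (k + i))
      (by intro i hi hij; exact hm (k + i) (by omega) (by omega))
    have e1 : g (k + 1) = tridiagDet (n - k - 1) (fun i => m (k + (i + 1))) := by
      simp only [hg]
      have : n - (k + 1) = n - k - 1 := by omega
      rw [this]
      exact tridiagDet_congr (fun i => by ring_nf)
    have e2 : g k = tridiagDet ((n - k - 1) + 1) (fun i => m (k + i)) := by
      simp only [hg]; congr 1
    rw [e1, e2] at *
    exact ⟨h1, h2⟩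
  have hgpos : ∀ k, k ≤ n → 1 ≤ g k := by
    intro k hk
    rcases Nat.eq_or_lt_of_le hk with h | h
    · rw [h, hgn]
    · have := F1 k h; omega
  -- recurrence for g
  have grec : ∀ k, k + 2 ≤ n → g k = m (k + 1) * g (k + 1) - g (k + 2) := by
    intro k hk
    have hj : n - k = (n - k - 2) + 2 := by omega
    have e0 : g k = tridiagDet ((n - k - 2) + 2) (fun i => m (k + i)) := by
      simp only [hg]; congr 1
    rw [e0, tridiagDet_rec]
    have e1 : tridiagDet ((n - k - 2) + 1) (fun i => m (k + (i + 1))) = g (k + 1) := by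
      simp only [hg]
      have : n - (k + 1) = (n - k - 2) + 1 := by omega
      rw [this]
      exact tridiagDet_congr (fun i => by ring_nf)
    have e2 : tridiagDet (n - k - 2) (fun i => m (k + (i + 2))) = g (k + 2) := by
      simp only [hg]
      have : n - (k + 2) = n - k - 2 := by omega
      rw [this]
      exact tridiagDet_congr (fun i => by ring_nf)
    rw [e1, e2]
  -- F2 and descending-difference claim
  have Fdiff : ∀ t, 1 ≤ t → t ≤ i₀ → g (i₀ - t) ≥ g (i₀ - t + 1) + g i₀ + 1 := by
    intro t
    induction t with
    | zero => omega
    | succ t IH =>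
        intro _ hti
        rcases Nat.eq_zero_or_pos t with rfl | ht
        · -- base case t = 1 : g (i₀ - 1) ≥ g i₀ + g i₀ + 1
          simp only [Nat.zero_add]
          rcases Nat.eq_or_lt_of_le hi₀n with h | h
          · -- i₀ = n
            have e : g (n - 1) = m n := by
              simp only [hg]
              have : n - (n - 1) = 1 := by omega
              rw [this, tridiagDet_one]
              congr 1; omega
            have : g (i₀ - 1 + 1) = g i₀ := by congr 1; omega
            rw [this]
            subst h
            rw [e, hgn]
            omega
          · -- i₀ < n
            have hrec := grec (i₀ - 1) (by omega)
            have e1 : i₀ - 1 + 1 = i₀ := by omega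
            have e2 : i₀ - 1 + 2 = i₀ + 1 := by omega
            rw [e1, e2] at hrec
            obtain ⟨h1, h2⟩ := F1 i₀ h
            have hp := hgpos i₀ (le_of_lt h)
            rw [e1]
            nlinarith [hm3, hp, h2, hrec]
        · have IH' := IH ht (by omega)
          have hrec := grec (i₀ - (t + 1)) (by omega)
          have e1 : i₀ - (t + 1) + 1 = i₀ - t := by omega
          have e2 : i₀ - (t + 1) + 2 = i₀ - t + 1 := by omega
          rw [e1, e2] at hrec
          have hm2 : 2 ≤ m (i₀ - t) := by
            have := hm (i₀ - (t + 1) + 1) (by omega) (by omega)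
            rwa [e1] at this
          have hp : 1 ≤ g (i₀ - t) := hgpos _ (by omega)
          rw [e1]
          nlinarith [IH', hrec, hm2, hp]
  -- telescoping
  have Htel : ∀ t, t ≤ i₀ → g (i₀ - t) ≥ ((t : ℤ) + 1) * g i₀ + t := by
    intro t
    induction t with
    | zero => intro _; simp
    | succ t IH =>
        intro ht
        have IH' := IH (by omega)
        have hd := Fdiff (t + 1) (by omega) ht
        have e1 : i₀ - (t + 1) + 1 = i₀ - t := by omega
        rw [e1] at hd
        push_cast
        nlinarith [IH', hd]
  have := Htel i₀ le_rfl
  simp only [Nat.sub_self] at this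
  rw [hg0] at this
  have : tridiagDet n m ≥ ((i₀ : ℤ) + 1) * g i₀ + i₀ := this
  have hi : (1 : ℤ) ≤ (i₀ : ℤ) := by exact_mod_cast hi₀1
  simp only [hg] at this ⊢
  linarith
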